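/- Let Cₙ(x₁,...,xₙ) be the full generating function for compositions (λ₁,...,λₙ) of positive integers with λᵢ ≥ λ_{i+1}/2 for 1 ≤ i < n (Minc-type compositions with n parts). Then C₁(x₁) = x₁/(1 − x₁) and for n ≥ 2: Cₙ(x₁,...,xₙ) = (xₙ/(1 − xₙ))·(C_{n−1}(x₁,...,x_{n−1}) − C_{n−1}(x₁,...,x_{n−2}, x_{n−1}xₙ²)). -/

import Mathlib

noncomputable section
open Classical

/-- `(λ₁,…,λ_k)` is a Minc-type composition: all parts positive and each part
is at most twice the preceding part. -/
def Minc (k : ℕ) (f : Fin k → ℕ) : Prop :=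
  (∀ i, 0 < f i) ∧ ∀ i : Fin k, ∀ h : (i : ℕ) + 1 < k, f ⟨(i : ℕ) + 1, h⟩ ≤ 2 * f i

/-- The full generating function `C_k(x₁,…,x_k)` of Minc-type compositions
with `k` parts. -/
def MincGF (k : ℕ) : MvPowerSeries (Fin k) ℤ :=
  fun d => if Minc k (fun i => d i) then 1 else 0

/-- `C_{m+1}(x₁,…,x_{m+1})` viewed in the `(m+2)`-variable power series ring. -/
def MincEmb (m : ℕ) : MvPowerSeries (Fin (m + 2)) ℤ :=
  fun d => if Minc (m + 1) (fun i => d i.castSucc) ∧ d (Fin.last (m + 1)) = 0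
    then 1 else 0

/-- `C_{m+1}(x₁,…,x_m,x_{m+1}x_{m+2}²)`: the result of the substitution
`x_{n−1} ← x_{n−1}xₙ²` (with `n = m+2`) applied to `C_{n−1}`; its coefficient
at `d` is nonzero exactly when the last exponent equals twice the
next-to-last exponent and the first `n−1` exponents form a Minc composition. -/
def MincSub (m : ℕ) : MvPowerSeries (Fin (m + 2)) ℤ :=
  fun d => if Minc (m + 1) (fun i => d i.castSucc) ∧
      d (Fin.last (m + 1)) = 2 * d ((Fin.last m).castSucc)
    then 1 else 0

lemma minc_iff (k : ℕ) (f : Fin k → ℕ) :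
    Minc k f ↔ (∀ j (h : j < k), 0 < f ⟨j, h⟩) ∧
      ∀ j (h1 : j < k) (h2 : j + 1 < k), f ⟨j + 1, h2⟩ ≤ 2 * f ⟨j, h1⟩ := by
  constructor
  · rintro ⟨a, b⟩
    exact ⟨fun j h => a ⟨j, h⟩, fun j h1 h2 => b ⟨j, h1⟩ h2⟩
  · rintro ⟨a, b⟩
    exact ⟨fun i => a i i.isLt, fun i h => b i i.isLt h⟩

lemma minc_succ (m : ℕ) (f : Fin (m + 2) → ℕ) :
    Minc (m + 2) f ↔ Minc (m + 1) (fun i => f i.castSucc) ∧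
      0 < f (Fin.last (m + 1)) ∧
      f (Fin.last (m + 1)) ≤ 2 * f ((Fin.last m).castSucc) := by
  rw [minc_iff, minc_iff]
  constructor
  · rintro ⟨a, b⟩
    exact ⟨⟨fun j h => a j (by omega), fun j h1 h2 => b j (by omega) (by omega)⟩,
      a (m + 1) (by omega), b m (by omega) (by omega)⟩
  · rintro ⟨⟨a, b⟩, hl, hs⟩
    constructor
    · intro j h
      rcases Nat.lt_or_ge j (m + 1) with h' | h'
      · exact a j h'
      · have : j = m + 1 := by omega
        subst this; exact hl
    · intro j h1 h2
      rcases Nat.lt_or_ge (j + 1) (m + 1) with h' | h'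
      · exact b j (by omega) h'
      · have : j = m := by omega
        subst this; exact hs

lemma minc_one (f : Fin 1 → ℕ) : Minc 1 f ↔ 0 < f 0 := by
  rw [minc_iff]
  constructor
  · rintro ⟨a, _⟩; exact a 0 (by omega)
  · intro h
    refine ⟨fun j hj => ?_, fun j h1 h2 => by omega⟩
    have : j = 0 := by omega
    subst this; exact h

lemma coeff_X_mul'' {k : ℕ} (s : Fin k) (F : MvPowerSeries (Fin k) ℤ) (d : Fin k →₀ ℕ) :
    MvPowerSeries.coeff d (MvPowerSeries.X s * F) =
      if 1 ≤ d s then MvPowerSeries.coeff (d - Finsupp.single s 1) F else 0 := by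
  rw [MvPowerSeries.X, MvPowerSeries.coeff_monomial_mul]
  simp [Finsupp.single_le_iff]

/-- The recurrence
`Cₙ(x₁,…,xₙ) = (xₙ/(1−xₙ))·(C_{n−1}(x₁,…,x_{n−1}) − C_{n−1}(x₁,…,x_{n−2},x_{n−1}xₙ²))`
for `n = m+2 ≥ 2`, together with the initial condition `C₁(x₁) = x₁/(1−x₁)`,
with the denominator `1 − xₙ` cleared. -/
theorem minc_recurrence :
    ((1 - MvPowerSeries.X (0 : Fin 1)) * MincGF 1 = MvPowerSeries.X 0) ∧
    ∀ m : ℕ,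
      (1 - MvPowerSeries.X (Fin.last (m + 1))) * MincGF (m + 2) =
        MvPowerSeries.X (Fin.last (m + 1)) * (MincEmb m - MincSub m) := by
  constructor
  · apply MvPowerSeries.ext
    intro d
    rw [sub_mul, one_mul, map_sub, coeff_X_mul'', MvPowerSeries.coeff_X]
    have hd : (d = Finsupp.single (0 : Fin 1) 1) ↔ d 0 = 1 := by
      constructor
      · intro h; subst h; simp
      · intro h
        refine Finsupp.ext fun i => ?_
        have : i = 0 := Subsingleton.elim _ _
        subst this; simpa using h
    simp only [MvPowerSeries.coeff_apply, MincGF, minc_one, Finsupp.tsub_apply,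
      Finsupp.single_eq_same, hd]
    split_ifs <;> omega
  · intro m
    apply MvPowerSeries.ext
    intro d
    rw [sub_mul, one_mul, map_sub, coeff_X_mul'', coeff_X_mul'']
    have key1 : ∀ i : Fin (m + 1),
        Finsupp.single (Fin.last (m + 1)) (1 : ℕ) i.castSucc = 0 :=
      fun i => Finsupp.single_eq_of_ne (Fin.castSucc_lt_last i).ne
    by_cases hdl : 1 ≤ d (Fin.last (m + 1))
    · simp only [if_pos hdl, map_sub, MvPowerSeries.coeff_apply, MincGF, MincEmb,
        MincSub, minc_succ, Finsupp.tsub_apply, key1, Finsupp.single_eq_same,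
        Nat.sub_zero]
      by_cases hP : Minc (m + 1) (fun i => d i.castSucc)
      · simp only [hP, true_and]
        split_ifs <;> omega
      · simp [hP]
    · have hM : ¬ Minc (m + 2) (fun i => (d i : ℕ)) := by
        rintro ⟨h1, -⟩
        exact hdl (h1 (Fin.last (m + 1)))
      simp [if_neg hdl, MvPowerSeries.coeff_apply, MincGF, hM]
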